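/- Let q : [0,∞) → ℝ be continuous with q(u) ≥ 0 for all u ≥ 0. Then there exists a differentiable function z : [0,∞) → ℝ with z(0) = 0 solving the Riccati equation z'(u) + z(u)² = q(u) for all u ≥ 0, and this solution satisfies z(u) ≥ 0 for all u ≥ 0. -/

import Mathlib

open Set

/-! Auxiliary material for the Riccati global existence theorem. -/

/-- Clamp a real number to the interval `[0, B]`. -/
noncomputable def rclamp (B x : ℝ) : ℝ := max (min x B) 0

lemma rclamp_nonneg (B x : ℝ) : 0 ≤ rclamp B x := le_max_right _ _

lemma rclamp_le {B : ℝ} (hB : 0 ≤ B) (x : ℝ) : rclamp B x ≤ B :=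
  max_le (min_le_right _ _) hB

lemma rclamp_of_nonpos {B x : ℝ} (hx : x ≤ 0) : rclamp B x = 0 :=
  max_eq_right ((min_le_left _ _).trans hx)

lemma rclamp_of_ge {B x : ℝ} (hB : 0 ≤ B) (hx : B ≤ x) : rclamp B x = B := by
  unfold rclamp
  rw [min_eq_right hx, max_eq_left hB]

lemma rclamp_eq_self {B x : ℝ} (h0 : 0 ≤ x) (hB : x ≤ B) : rclamp B x = x := by
  unfold rclamp
  rw [min_eq_left hB, max_eq_left h0]

lemma rclamp_lipschitz (B x y : ℝ) : |rclamp B x - rclamp B y| ≤ |x - y| := by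
  calc |max (min x B) 0 - max (min y B) 0| ≤ |min x B - min y B| :=
        abs_max_sub_max_le_abs _ _ _
    _ ≤ max |x - y| |B - B| := abs_min_sub_min_le_max _ _ _ _
    _ = |x - y| := by simp

/-- Invariance lemma: if `f a ≥ c` and the derivative of `f` is nonnegative wherever
`f ≤ c`, then `f ≥ c` on all of `[a, b]`. -/
lemma ge_of_deriv_nonneg_of_le {a b c : ℝ} {f F : ℝ → ℝ}
    (hf' : ∀ t ∈ Icc a b, HasDerivWithinAt f (F t) (Icc a b) t)
    (hfa : c ≤ f a)
    (hF : ∀ t ∈ Icc a b, f t ≤ c → 0 ≤ F t) :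
    ∀ t ∈ Icc a b, c ≤ f t := by
  intro t ht
  by_contra hlt
  push_neg at hlt
  have hcont : ContinuousOn f (Icc a b) := fun r hr => (hf' r hr).continuousWithinAt
  set S : Set ℝ := Icc a t ∩ f ⁻¹' (Ici c) with hS
  have hIccsub : Icc a t ⊆ Icc a b := Icc_subset_Icc le_rfl ht.2
  have hSclosed : IsClosed S :=
    (hcont.mono hIccsub).preimage_isClosed_of_isClosed isClosed_Icc isClosed_Ici
  have hScomp : IsCompact S :=
    isCompact_Icc.of_isClosed_subset hSclosed inter_subset_left
  have hane : a ∈ S := ⟨⟨le_rfl, ht.1⟩, hfa⟩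
  set s₀ := sSup S with hs₀
  have hs₀S : s₀ ∈ S := hScomp.sSup_mem ⟨a, hane⟩
  have hs₀t : s₀ ≤ t := hs₀S.1.2
  have has₀ : a ≤ s₀ := hs₀S.1.1
  have hfs₀ : c ≤ f s₀ := hs₀S.2
  have hs₀lt : s₀ < t := by
    rcases lt_or_eq_of_le hs₀t with h | h
    · exact h
    · exact absurd (h ▸ hfs₀) (not_le.mpr hlt)
  have hmono : MonotoneOn f (Icc s₀ t) := by
    apply monotoneOn_of_hasDerivWithinAt_nonneg (convex_Icc _ _)
        (hcont.mono (Icc_subset_Icc has₀ ht.2)) (f' := F)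
    · intro x hx
      rw [interior_Icc] at hx
      have hxab : x ∈ Icc a b := ⟨has₀.trans hx.1.le, hx.2.le.trans ht.2⟩
      rw [interior_Icc]
      exact (hf' x hxab).mono (fun r hr => ⟨has₀.trans hr.1.le, hr.2.le.trans ht.2⟩)
    · intro x hx
      rw [interior_Icc] at hx
      have hxab : x ∈ Icc a b := ⟨has₀.trans hx.1.le, hx.2.le.trans ht.2⟩
      have hfx : f x < c := by
        by_contra hge
        push_neg at hge
        have : x ∈ S := ⟨⟨has₀.trans hx.1.le, hx.2.le⟩, hge⟩
        exact absurd (le_csSup hScomp.bddAbove this) (not_le.mpr hx.1)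
      exact hF x hxab hfx.le
  have : f s₀ ≤ f t := hmono ⟨le_rfl, hs₀t⟩ ⟨hs₀t, le_rfl⟩ hs₀t
  exact absurd (hfs₀.trans this) (not_le.mpr hlt)

/-- Existence of a nonnegative, bounded solution of the Riccati equation on `[0, T]`. -/
lemma riccati_sol_Icc (q : ℝ → ℝ)
    (hq : ContinuousOn q (Set.Ici 0))
    (hq0 : ∀ u ∈ Set.Ici (0 : ℝ), 0 ≤ q u)
    (T : ℝ) (hT : 0 < T) :
    ∃ z : ℝ → ℝ, ∃ B : ℝ, z 0 = 0 ∧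
      (∀ t ∈ Icc (0 : ℝ) T, HasDerivWithinAt z (q t - z t ^ 2) (Icc (0 : ℝ) T) t) ∧
      (∀ t ∈ Icc (0 : ℝ) T, 0 ≤ z t ∧ z t ≤ B) := by
  -- bound on q
  obtain ⟨C, hC⟩ := isCompact_Icc.exists_bound_of_continuousOn (hq.mono Icc_subset_Ici_self)
  set M : ℝ := max C 0 with hM
  have hM0 : 0 ≤ M := le_max_right _ _
  have hqM : ∀ t ∈ Icc (0 : ℝ) T, q t ≤ M := fun t ht =>
    (le_abs_self _).trans ((Real.norm_eq_abs (q t) ▸ hC t ht).trans (le_max_left _ _))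
  set B : ℝ := Real.sqrt M with hB
  have hB0 : 0 ≤ B := Real.sqrt_nonneg _
  have hB2 : B ^ 2 = M := Real.sq_sqrt hM0
  set v : ℝ → ℝ → ℝ := fun t x => q t - rclamp B x ^ 2 with hv
  have hclamp_sq : ∀ x : ℝ, 0 ≤ rclamp B x ^ 2 ∧ rclamp B x ^ 2 ≤ M := by
    intro x
    constructor
    · positivity
    · rw [← hB2]
      exact pow_le_pow_left₀ (rclamp_nonneg _ _) (rclamp_le hB0 x) 2
  have hL : (0 : ℝ) ≤ 2 * B := by positivity
  have hpl : IsPicardLindelof v (⟨0, ⟨le_rfl, hT.le⟩⟩ : Icc (0 : ℝ) T) 0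
      ⟨M * T, by positivity⟩ 0 ⟨M, hM0⟩ ⟨2 * B, hL⟩ := by
    constructor
    · intro t _
      apply LipschitzWith.lipschitzOnWith
      apply LipschitzWith.of_dist_le_mul
      intro x y
      have key : |rclamp B x ^ 2 - rclamp B y ^ 2| ≤ 2 * B * |x - y| := by
        have h1 : |rclamp B x + rclamp B y| ≤ 2 * B := by
          have hx1 := rclamp_nonneg B x
          have hy1 := rclamp_nonneg B y
          have hx2 := rclamp_le hB0 x
          have hy2 := rclamp_le hB0 y
          rw [abs_of_nonneg (by linarith)]
          linarith
        calc |rclamp B x ^ 2 - rclamp B y ^ 2|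
            = |rclamp B x - rclamp B y| * |rclamp B x + rclamp B y| := by
              rw [← abs_mul]; congr 1; ring
          _ ≤ |x - y| * (2 * B) := by
              apply mul_le_mul (rclamp_lipschitz B x y) h1 (abs_nonneg _) (abs_nonneg _)
          _ = 2 * B * |x - y| := by ring
      simp only [Real.dist_eq, hv, NNReal.coe_mk]
      have hrw : q t - rclamp B x ^ 2 - (q t - rclamp B y ^ 2)
          = -(rclamp B x ^ 2 - rclamp B y ^ 2) := by ring
      rw [hrw, abs_neg]
      exact key
    · intro x _
      exact (hq.mono Icc_subset_Ici_self).sub continuousOn_const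
    · intro t ht x _
      show ‖v t x‖ ≤ M
      rw [Real.norm_eq_abs, abs_le]
      have h1 := hqM t ht
      have h2 := hq0 t ht.1
      have h3 := hclamp_sq x
      constructor <;> simp only [hv] <;> nlinarith [h3.1, h3.2]
    · simp only [NNReal.coe_mk, NNReal.coe_zero, sub_zero, sub_self]
      rw [max_eq_left hT.le]
      exact le_rfl
  obtain ⟨z, hz0, hz'⟩ := hpl.exists_eq_forall_mem_Icc_hasDerivWithinAt₀
  have hz0 : z 0 = 0 := hz0
  -- lower bound: 0 ≤ z
  have hlow : ∀ t ∈ Icc (0 : ℝ) T, 0 ≤ z t := by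
    apply ge_of_deriv_nonneg_of_le hz' (le_of_eq hz0.symm)
    intro t ht hzt
    simp only [hv, rclamp_of_nonpos hzt]
    have := hq0 t ht.1
    norm_num
    linarith
  -- upper bound: z ≤ B
  have hup : ∀ t ∈ Icc (0 : ℝ) T, z t ≤ B := by
    have key := ge_of_deriv_nonneg_of_le (f := fun t => -(z t)) (F := fun t => -(v t (z t)))
      (c := -B) (fun t ht => (hz' t ht).neg)
      (by show -B ≤ -(z 0); rw [hz0, neg_zero]; linarith) ?_
    · intro t ht
      have h : -B ≤ -(z t) := key t ht
      linarith
    · intro t ht hle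
      have hle' : -(z t) ≤ -B := hle
      have hBz : B ≤ z t := by linarith
      show 0 ≤ -(v t (z t))
      simp only [hv, rclamp_of_ge hB0 hBz, hB2]
      have := hqM t ht
      linarith
  refine ⟨z, B, hz0, fun t ht => ?_, fun t ht => ⟨hlow t ht, hup t ht⟩⟩
  have h := hz' t ht
  simpa only [hv, rclamp_eq_self (hlow t ht) (hup t ht)] using h

/-- Uniqueness of bounded solutions of the Riccati equation on `[0, T]`. -/
lemma riccati_unique (q : ℝ → ℝ) {T T₁ T₂ B₁ B₂ : ℝ} {z₁ z₂ : ℝ → ℝ}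
    (hT : 0 ≤ T) (hTT₁ : T ≤ T₁) (hTT₂ : T ≤ T₂)
    (h₁' : ∀ t ∈ Icc (0 : ℝ) T₁, HasDerivWithinAt z₁ (q t - z₁ t ^ 2) (Icc (0 : ℝ) T₁) t)
    (hb₁ : ∀ t ∈ Icc (0 : ℝ) T₁, 0 ≤ z₁ t ∧ z₁ t ≤ B₁)
    (h₂' : ∀ t ∈ Icc (0 : ℝ) T₂, HasDerivWithinAt z₂ (q t - z₂ t ^ 2) (Icc (0 : ℝ) T₂) t)
    (hb₂ : ∀ t ∈ Icc (0 : ℝ) T₂, 0 ≤ z₂ t ∧ z₂ t ≤ B₂)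
    (h0 : z₁ 0 = z₂ 0) :
    EqOn z₁ z₂ (Icc (0 : ℝ) T) := by
  set R : ℝ := max B₁ B₂ with hR
  have hB₁0 : 0 ≤ B₁ := le_trans (hb₁ 0 ⟨le_rfl, hT.trans hTT₁⟩).1 (hb₁ 0 ⟨le_rfl, hT.trans hTT₁⟩).2
  have hR0 : 0 ≤ R := hB₁0.trans (le_max_left _ _)
  have hK : (0 : ℝ) ≤ 2 * R := by positivity
  apply ODE_solution_unique_of_mem_Icc_right
    (v := fun t x => q t - x ^ 2) (s := fun _ => Metric.closedBall 0 R) (K := (⟨2 * R, hK⟩ : NNReal))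
  · intro t _
    apply lipschitzOnWith_iff_dist_le_mul.mpr
    intro x hx y hy
    rw [Metric.mem_closedBall, Real.dist_eq, sub_zero] at hx hy
    rw [Real.dist_eq, Real.dist_eq]
    calc |q t - x ^ 2 - (q t - y ^ 2)| = |y ^ 2 - x ^ 2| := by congr 1; ring
      _ = |y - x| * |y + x| := by rw [← abs_mul]; congr 1; ring
      _ ≤ |x - y| * (2 * R) := by
          rw [abs_sub_comm y x]
          apply mul_le_mul le_rfl ((abs_add_le _ _).trans (by linarith)) (abs_nonneg _)
            (abs_nonneg _)
      _ = 2 * R * |x - y| := by ring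
  · exact fun r hr =>
      ((h₁' r ⟨hr.1, hr.2.trans hTT₁⟩).mono (Icc_subset_Icc le_rfl hTT₁)).continuousWithinAt
  · intro t ht
    have htT₁ : t < T₁ := lt_of_lt_of_le ht.2 hTT₁
    have h := (h₁' t ⟨ht.1, htT₁.le⟩).mono (s := Ici t ∩ Iio T₁)
      (fun r hr => ⟨ht.1.trans hr.1, hr.2.le⟩)
    exact (hasDerivWithinAt_inter (Iio_mem_nhds htT₁)).mp h
  · intro t ht
    have h := hb₁ t ⟨ht.1, ht.2.le.trans hTT₁⟩
    rw [Metric.mem_closedBall, Real.dist_eq, sub_zero, abs_of_nonneg h.1]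
    exact h.2.trans (le_max_left _ _)
  · exact fun r hr =>
      ((h₂' r ⟨hr.1, hr.2.trans hTT₂⟩).mono (Icc_subset_Icc le_rfl hTT₂)).continuousWithinAt
  · intro t ht
    have htT₂ : t < T₂ := lt_of_lt_of_le ht.2 hTT₂
    have h := (h₂' t ⟨ht.1, htT₂.le⟩).mono (s := Ici t ∩ Iio T₂)
      (fun r hr => ⟨ht.1.trans hr.1, hr.2.le⟩)
    exact (hasDerivWithinAt_inter (Iio_mem_nhds htT₂)).mp h
  · intro t ht
    have h := hb₂ t ⟨ht.1, ht.2.le.trans hTT₂⟩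
    rw [Metric.mem_closedBall, Real.dist_eq, sub_zero, abs_of_nonneg h.1]
    exact h.2.trans (le_max_right _ _)
  · exact h0

/-- For continuous `q : [0,∞) → ℝ` with `q ≥ 0`, the Riccati equation
`z' + z² = q`, `z 0 = 0`, admits a (differentiable) solution on all of `[0,∞)`, and this
solution satisfies `z u ≥ 0` for all `u ≥ 0`. -/
theorem riccati_global_nonneg_solution (q : ℝ → ℝ)
    (hq : ContinuousOn q (Set.Ici 0))
    (hq0 : ∀ u ∈ Set.Ici (0 : ℝ), 0 ≤ q u) :
    ∃ z : ℝ → ℝ, z 0 = 0 ∧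
      (∀ u ∈ Set.Ici (0 : ℝ), HasDerivWithinAt z (q u - z u ^ 2) (Set.Ici 0) u) ∧
      (∀ u ∈ Set.Ici (0 : ℝ), 0 ≤ z u) := by
  have H : ∀ n : ℕ, ∃ z : ℝ → ℝ, ∃ B : ℝ, z 0 = 0 ∧
      (∀ t ∈ Icc (0 : ℝ) ((n : ℝ) + 1), HasDerivWithinAt z (q t - z t ^ 2)
        (Icc (0 : ℝ) ((n : ℝ) + 1)) t) ∧
      (∀ t ∈ Icc (0 : ℝ) ((n : ℝ) + 1), 0 ≤ z t ∧ z t ≤ B) :=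
    fun n => riccati_sol_Icc q hq hq0 ((n : ℝ) + 1) (by positivity)
  choose sol Bnd h0 hderiv hbound using H
  -- consistency of the chosen solutions
  have key : ∀ m n : ℕ, ∀ t : ℝ, 0 ≤ t → t ≤ (m : ℝ) + 1 → t ≤ (n : ℝ) + 1 →
      sol m t = sol n t := by
    intro m n t ht htm htn
    have := riccati_unique q (T := min ((m : ℝ) + 1) ((n : ℝ) + 1))
      (le_min (by positivity) (by positivity)) (min_le_left _ _) (min_le_right _ _)
      (hderiv m) (hbound m) (hderiv n) (hbound n) (by rw [h0 m, h0 n])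
    exact this ⟨ht, le_min htm htn⟩
  refine ⟨fun u => sol ⌈u⌉₊ u, ?_, ?_, ?_⟩
  · simpa using h0 0
  · intro u hu
    set n : ℕ := ⌈u⌉₊ with hn
    have hun : u ≤ (n : ℝ) := Nat.le_ceil u
    have hun' : u < (n : ℝ) + 1 := lt_of_le_of_lt hun (lt_add_one _)
    have hzeq : ∀ t ∈ Ici (0 : ℝ) ∩ Iio ((n : ℝ) + 1), sol ⌈t⌉₊ t = sol n t := by
      intro t ht
      exact key ⌈t⌉₊ n t ht.1 ((Nat.le_ceil t).trans (by linarith [lt_add_one ((⌈t⌉₊ : ℝ))]))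
        ht.2.le
    have hd : HasDerivWithinAt (sol n) (q u - sol n u ^ 2) (Icc (0 : ℝ) ((n : ℝ) + 1)) u :=
      hderiv n u ⟨hu, hun'.le⟩
    have hd2 : HasDerivWithinAt (sol n) (q u - sol n u ^ 2) (Ici (0 : ℝ)) u := by
      have h := hd.mono (s := Ici (0 : ℝ) ∩ Iio ((n : ℝ) + 1))
        (fun r hr => ⟨hr.1, hr.2.le⟩)
      exact (hasDerivWithinAt_inter (Iio_mem_nhds hun')).mp h
    have hzu : sol ⌈u⌉₊ u = sol n u := hzeq u ⟨hu, hun'⟩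
    have heq : (fun u => sol ⌈u⌉₊ u) =ᶠ[nhdsWithin u (Ici (0 : ℝ))] sol n := by
      filter_upwards [self_mem_nhdsWithin,
        mem_nhdsWithin_of_mem_nhds (Iio_mem_nhds hun')] with t h1 h2
      exact hzeq t ⟨h1, h2⟩
    have := hd2.congr_of_eventuallyEq heq hzu
    simpa [hzu] using this
  · intro u hu
    have hun' : u ≤ (⌈u⌉₊ : ℝ) + 1 := (Nat.le_ceil u).trans (by linarith [lt_add_one ((⌈u⌉₊ : ℝ))])
    exact (hbound ⌈u⌉₊ u ⟨hu, hun'⟩).1
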